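/- (First part of Lemma 1 of the paper.) Let f_1,…,f_K : EuclideanSpace ℝ n → ℝ be differentiable. If θ* is Pareto-optimal for (f_1,…,f_K), then θ* is Pareto-stationary: there exist λ_1,…,λ_K ≥ 0 with Σ_{k=1}^K λ_k = 1 and Σ_{k=1}^K λ_k ∇f_k(θ*) = 0. -/

import Mathlib

open RealInnerProductSpace Finset

/-- First part of Lemma 1: on Euclidean space, a Pareto-optimal point of
differentiable objectives `f 1, …, f K` is Pareto-stationary: some convex
combination of the gradients at that point vanishes. -/
theorem pareto_optimal_implies_pareto_stationary {n K : ℕ} (hK : 0 < K)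
    (f : Fin K → EuclideanSpace ℝ (Fin n) → ℝ)
    (hdiff : ∀ k, Differentiable ℝ (f k))
    (θs : EuclideanSpace ℝ (Fin n))
    (hpareto : ¬ ∃ θ, (∀ k, f k θ ≤ f k θs) ∧ ∃ j, f j θ < f j θs) :
    ∃ lam : Fin K → ℝ, (∀ k, 0 ≤ lam k) ∧ (∑ k, lam k = 1) ∧
      ∑ k, lam k • gradient (f k) θs = 0 := by
  classical
  set g : Fin K → EuclideanSpace ℝ (Fin n) := fun k => gradient (f k) θs with hg
  -- the linear map taking weights to the weighted combination of gradients
  let T : (Fin K → ℝ) →ₗ[ℝ] EuclideanSpace ℝ (Fin n) :=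
    { toFun := fun lam => ∑ k, lam k • g k
      map_add' := by
        intro a b
        simp [add_smul, Finset.sum_add_distrib]
      map_smul' := by
        intro c a
        simp [Finset.smul_sum, smul_smul] }
  let C : Set (EuclideanSpace ℝ (Fin n)) := T '' stdSimplex ℝ (Fin K)
  suffices h0 : (0 : EuclideanSpace ℝ (Fin n)) ∈ C by
    obtain ⟨lam, hlam, hT⟩ := h0
    exact ⟨lam, hlam.1, hlam.2, hT⟩
  by_contra h0
  -- C is convex and closed
  have hCc : Convex ℝ C := (convex_stdSimplex ℝ (Fin K)).linear_image T
  have hTcont : Continuous T := by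
    show Continuous fun lam : Fin K → ℝ => ∑ k, lam k • g k
    exact continuous_finset_sum _ fun k _ => (continuous_apply k).smul continuous_const
  have hCcl : IsClosed C := ((isCompact_stdSimplex ℝ (Fin K)).image hTcont).isClosed
  -- separate 0 from C
  obtain ⟨L, u, hLu, huC⟩ := geometric_hahn_banach_point_closed hCc hCcl h0
  have hu : 0 < u := by simpa using hLu
  -- the separating functional as an inner product
  set d : EuclideanSpace ℝ (Fin n) := (InnerProductSpace.toDual ℝ _).symm L with hd
  have hdL : ∀ y : EuclideanSpace ℝ (Fin n), ⟪d, y⟫ = L y := fun y =>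
    InnerProductSpace.toDual_symm_apply
  set v : EuclideanSpace ℝ (Fin n) := -d with hv
  -- each gradient is in C
  have hgC : ∀ k, g k ∈ C := by
    intro k
    refine ⟨fun j => if j = k then 1 else 0, ⟨fun j => by positivity, by simp⟩, ?_⟩
    simp [T, ite_smul]
  have hneg : ∀ k, ⟪g k, v⟫ < 0 := by
    intro k
    have : u < L (g k) := huC _ (hgC k)
    have h1 : ⟪d, g k⟫ = L (g k) := hdL _
    have : (0:ℝ) < ⟪g k, d⟫ := by
      rw [real_inner_comm, h1]; exact hu.trans this
    simpa [hv, inner_neg_right] using neg_neg_of_pos this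
  -- directional derivatives along v are negative, so a small step decreases all f k
  have hderiv : ∀ k, HasDerivAt (fun t : ℝ => f k (θs + t • v)) ⟪g k, v⟫ 0 := by
    intro k
    have hc : HasDerivAt (fun t : ℝ => θs + t • v) v 0 := by
      simpa using ((hasDerivAt_id (0:ℝ)).smul_const v).const_add θs
    have hf : HasFDerivAt (f k) (InnerProductSpace.toDual ℝ _ (g k)) θs :=
      ((hdiff k) θs).hasGradientAt.hasFDerivAt
    have h0pt : θs = θs + (0:ℝ) • v := by simp
    rw [h0pt] at hf
    simpa [InnerProductSpace.toDual_apply_apply, Function.comp_def] using hf.comp_hasDerivAt 0 hc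
  have hsmall : ∀ k, ∀ᶠ t in nhdsWithin (0:ℝ) (Set.Ioi 0),
      f k (θs + t • v) < f k θs := by
    intro k
    have hslope := hasDerivAt_iff_tendsto_slope.1 (hderiv k)
    have hev : ∀ᶠ t in nhdsWithin (0:ℝ) {(0:ℝ)}ᶜ,
        slope (fun t : ℝ => f k (θs + t • v)) 0 t < 0 :=
      hslope.eventually (Iio_mem_nhds (hneg k))
    have hmono : nhdsWithin (0:ℝ) (Set.Ioi 0) ≤ nhdsWithin (0:ℝ) {(0:ℝ)}ᶜ :=
      nhdsWithin_mono 0 (fun t ht => ne_of_gt ht)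
    filter_upwards [hmono hev, self_mem_nhdsWithin] with t hts (htpos : 0 < t)
    have : (f k (θs + t • v) - f k (θs + (0:ℝ) • v)) / (t - 0) < 0 := by
      simpa [slope_def_field, div_eq_inv_mul] using hts
    rw [sub_zero] at this
    have := (div_neg_iff.1 this).resolve_left (fun h => absurd htpos (not_lt.2 h.2.le))
    simpa using sub_neg.1 this.1
  have hall : ∀ᶠ t in nhdsWithin (0:ℝ) (Set.Ioi 0),
      ∀ k, f k (θs + t • v) < f k θs := Filter.eventually_all.2 hsmall
  obtain ⟨t, ht⟩ := hall.exists
  exact hpareto ⟨θs + t • v, fun k => (ht k).le, ⟨0, hK⟩, ht _⟩
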